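/- arXiv:1804.01377 — 7 statements merged into one kernel-verified Lean document; each statement's English description precedes it below -/
import Mathlib

section
/- Let φ : ℝ → ℝ be convex on an interval [x₁, x₂] ⊂ ℝ with x₁ < x₂, and suppose φ is not affine on [x₁, x₂] (i.e., there is no pair α, β ∈ ℝ with φ(x) = αx + β for all x ∈ [x₁, x₂]). Then for every ξ with 0 < ξ < x₂ − x₁, φ(x₁ + ξ) + φ(x₂ − ξ) < φ(x₁) + φ(x₂). -/
/-- A convex function vanishing at both endpoints is nonpositive on the interval. -/
lemma aux_nonpos (ψ : ℝ → ℝ) (x₁ x₂ : ℝ) (hx : x₁ < x₂)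
    (hc : ConvexOn ℝ (Set.Icc x₁ x₂) ψ) (h1 : ψ x₁ = 0) (h2 : ψ x₂ = 0) :
    ∀ x ∈ Set.Icc x₁ x₂, ψ x ≤ 0 := by
  intro x hxm
  obtain ⟨hxl, hxr⟩ := hxm
  set θ : ℝ := (x₂ - x) / (x₂ - x₁) with hθ
  have hden : (0:ℝ) < x₂ - x₁ := by linarith
  have hθ0 : 0 ≤ θ := div_nonneg (by linarith) hden.le
  have hθ1 : θ ≤ 1 := by
    rw [hθ, div_le_one hden]; linarith
  have hθ0' : (0:ℝ) ≤ 1 - θ := by linarith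
  have hcomb : θ • x₁ + (1 - θ) • x₂ = x := by
    simp only [smul_eq_mul]
    rw [hθ]
    field_simp
    ring
  have h := hc.2 (Set.left_mem_Icc.mpr hx.le) (Set.right_mem_Icc.mpr hx.le)
    hθ0 hθ0' (by ring)
  rw [hcomb, h1, h2] at h
  simpa using h

/-- A convex function vanishing at both endpoints and at an interior point vanishes everywhere. -/
lemma aux_zero (ψ : ℝ → ℝ) (x₁ x₂ : ℝ) (hx : x₁ < x₂)
    (hc : ConvexOn ℝ (Set.Icc x₁ x₂) ψ) (h1 : ψ x₁ = 0) (h2 : ψ x₂ = 0)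
    (a : ℝ) (ha : a ∈ Set.Ioo x₁ x₂) (hψa : ψ a = 0) :
    ∀ x ∈ Set.Icc x₁ x₂, ψ x = 0 := by
  intro x hxm
  have hnp := aux_nonpos ψ x₁ x₂ hx hc h1 h2
  have hxnp := hnp x hxm
  obtain ⟨hxl, hxr⟩ := hxm
  obtain ⟨hal, har⟩ := ha
  rcases le_or_gt x a with hxa | hax
  · -- a between x and x₂
    set θ : ℝ := (x₂ - a) / (x₂ - x) with hθ
    have hden : (0:ℝ) < x₂ - x := by linarith
    have hθ0 : 0 < θ := div_pos (by linarith) hden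
    have hθ1 : θ ≤ 1 := by rw [hθ, div_le_one hden]; linarith
    have hθ0' : (0:ℝ) ≤ 1 - θ := by linarith
    have hcomb : θ • x + (1 - θ) • x₂ = a := by
      simp only [smul_eq_mul]; rw [hθ]; field_simp; ring
    have h := hc.2 (Set.mem_Icc.mpr ⟨hxl, hxr⟩) (Set.right_mem_Icc.mpr hx.le)
      hθ0.le hθ0' (by ring)
    rw [hcomb, hψa, h2] at h
    simp only [smul_eq_mul, mul_zero, add_zero] at h
    nlinarith
  · -- a between x₁ and x
    set θ : ℝ := (x - a) / (x - x₁) with hθ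
    have hden : (0:ℝ) < x - x₁ := by linarith
    have hθ0 : 0 ≤ θ := div_nonneg (by linarith) hden.le
    have hθ1 : θ < 1 := by rw [hθ, div_lt_one hden]; linarith
    have hθ0' : (0:ℝ) ≤ 1 - θ := by linarith
    have hcomb : θ • x₁ + (1 - θ) • x = a := by
      simp only [smul_eq_mul]; rw [hθ]; field_simp; ring
    have h := hc.2 (Set.left_mem_Icc.mpr hx.le) (Set.mem_Icc.mpr ⟨hxl, hxr⟩)
      hθ0 hθ0' (by ring)
    rw [hcomb, hψa, h1] at h
    simp only [smul_eq_mul, mul_zero, zero_add] at h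
    nlinarith

/-- Lemma 1: a convex, non-affine function on `[x₁, x₂]` satisfies a strict
exchange inequality. -/
theorem stmt_0 (φ : ℝ → ℝ) (x₁ x₂ : ℝ) (hx : x₁ < x₂)
    (hconv : ConvexOn ℝ (Set.Icc x₁ x₂) φ)
    (hnonaff : ¬ ∃ α β : ℝ, ∀ x ∈ Set.Icc x₁ x₂, φ x = α * x + β) :
    ∀ ξ : ℝ, 0 < ξ → ξ < x₂ - x₁ →
      φ (x₁ + ξ) + φ (x₂ - ξ) < φ x₁ + φ x₂ := by
  intro ξ hξ0 hξ1
  have hden : (0:ℝ) < x₂ - x₁ := by linarith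
  set α : ℝ := (φ x₂ - φ x₁) / (x₂ - x₁) with hα
  set β : ℝ := φ x₁ - α * x₁ with hβ
  set ψ : ℝ → ℝ := fun x => φ x - (α * x + β) with hψ
  have hcψ : ConvexOn ℝ (Set.Icc x₁ x₂) ψ := by
    refine ⟨hconv.1, fun x hxm y hym a b ha hb hab => ?_⟩
    have h := hconv.2 hxm hym ha hb hab
    simp only [hψ, smul_eq_mul] at h ⊢
    have key : a * (φ x - (α * x + β)) + b * (φ y - (α * y + β))
        = a * φ x + b * φ y - (α * (a * x + b * y) + β) := by
      linear_combination (-β) * hab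
    rw [key]
    linarith
  have h1 : ψ x₁ = 0 := by simp [hψ, hβ]
  have hα2 : α * (x₂ - x₁) = φ x₂ - φ x₁ := by
    rw [hα]; field_simp
  have h2 : ψ x₂ = 0 := by
    simp only [hψ, hβ]; nlinarith
  have hnp := aux_nonpos ψ x₁ x₂ hx hcψ h1 h2
  -- get interior point where ψ < 0
  push_neg at hnonaff
  obtain ⟨c, hcm, hcne⟩ := hnonaff α β
  have hψc : ψ c < 0 := by
    refine lt_of_le_of_ne (hnp c hcm) ?_
    simp only [hψ]
    intro h
    exact hcne (by linarith)
  have hcio : c ∈ Set.Ioo x₁ x₂ := by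
    obtain ⟨hcl, hcr⟩ := hcm
    constructor
    · rcases hcl.lt_or_eq with h | h
      · exact h
      · exfalso; rw [h] at h1; linarith
    · rcases hcr.lt_or_eq with h | h
      · exact h
      · exfalso; rw [h] at hψc; linarith
  set a : ℝ := x₁ + ξ with hA
  set b : ℝ := x₂ - ξ with hB
  have haio : a ∈ Set.Ioo x₁ x₂ := ⟨by rw [hA]; linarith, by rw [hA]; linarith⟩
  have hbm : b ∈ Set.Icc x₁ x₂ := ⟨by rw [hB]; linarith, by rw [hB]; linarith⟩
  have hψa : ψ a < 0 := by
    rcases (hnp a ⟨haio.1.le, haio.2.le⟩).lt_or_eq with h | h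
    · exact h
    · exfalso
      have hz := aux_zero ψ x₁ x₂ hx hcψ h1 h2 a haio h
      have := hz c ⟨hcio.1.le, hcio.2.le⟩
      linarith
  have hψb : ψ b ≤ 0 := hnp b hbm
  have hab : a + b = x₁ + x₂ := by rw [hA, hB]; ring
  have e1 : φ a = ψ a + (α * a + β) := by simp [hψ]
  have e2 : φ b = ψ b + (α * b + β) := by simp [hψ]
  have e3 : φ x₁ = α * x₁ + β := by
    have h := h1; simp only [hψ] at h; linarith
  have e4 : φ x₂ = α * x₂ + β := by
    have h := h2; simp only [hψ] at h; linarith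
  have hlin : α * a + α * b = α * x₁ + α * x₂ := by linear_combination α * hab
  rw [e1, e2, e3, e4]
  linarith
end

section
/- Consider the optimization problem: minimize over w ∈ ℝ^{n_w} and y₁,…,y_N ∈ ℝ the objective γ(w) + φ(Z₀) + Σ_{r=1}^{N} [φ(y_r) − φ(Z_{r−1})], subject to Z_{r−1} ≤ y_r ≤ Z_r for r = 1,…,N and Ā·(Z₀ + Σ_{r=1}^{N}[y_r − Z_{r−1}]) + B̄ w ≤ C̄ componentwise. If (w*, y₁*,…,y_N*) is an optimizer (a feasible point attaining the minimum), then for every r ∈ {2,…,N}: if y_r* > Z_{r−1}, then y_s* = Z_s for all s = 1,…,r−1. -/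
lemma quad_eq_affine {h f g p q u v : ℝ} (huv : u < v)
    (H : ∀ z ∈ Set.Icc u v, h / 2 * z ^ 2 + f * z + g = p * z + q) :
    h = 0 ∧ f = p ∧ g = q := by
  have e1 := H u ⟨le_refl _, huv.le⟩
  have e2 := H v ⟨huv.le, le_refl _⟩
  have e3 := H ((u + v) / 2) ⟨by linarith, by linarith⟩
  have hne : u - v ≠ 0 := by intro hc; linarith [sub_eq_zero.mp hc]
  have h0 : h = 0 := by
    have h2 : h * (u - v) ^ 2 = 0 := by nlinarith [e1, e2, e3]
    rcases mul_eq_zero.mp h2 with h3 | h3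
    · exact h3
    · exact absurd (pow_eq_zero_iff (n := 2) (by norm_num) |>.mp h3) hne
  subst h0
  have hf : f = p := by
    have : (f - p) * (u - v) = 0 := by nlinarith [e1, e2]
    rcases mul_eq_zero.mp this with h3 | h3
    · linarith [sub_eq_zero.mp h3]
    · exact absurd h3 hne
  subst hf
  refine ⟨rfl, rfl, by linarith⟩

lemma convex_chord_le {S : Set ℝ} {φ : ℝ → ℝ} (hconv : ConvexOn ℝ S φ)
    {a b : ℝ} (ha : a ∈ S) (hb : b ∈ S) (hab : a < b) :
    ∀ y ∈ Set.Icc a b, φ y * (b - a) ≤ (b - y) * φ a + (y - a) * φ b := by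
  have hba : (0:ℝ) < b - a := by linarith
  intro y hy
  obtain ⟨hay, hyb⟩ := hy
  set t : ℝ := (b - y) / (b - a) with ht
  have ht0 : 0 ≤ t := div_nonneg (by linarith) hba.le
  have ht1 : t ≤ 1 := by rw [div_le_one hba]; linarith
  have e : t * (b - a) = b - y := by rw [ht]; exact div_mul_cancel₀ _ hba.ne'
  have hyc : t • a + (1 - t) • b = y := by simp only [smul_eq_mul]; linear_combination -e
  have := hconv.2 ha hb ht0 (show (0:ℝ) ≤ 1 - t by linarith)
    (show t + (1 - t) = 1 by ring)
  rw [hyc] at this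
  have h2 : φ y ≤ t * φ a + (1 - t) * φ b := this
  calc φ y * (b - a) ≤ (t * φ a + (1 - t) * φ b) * (b - a) :=
        mul_le_mul_of_nonneg_right h2 hba.le
    _ = (b - y) * φ a + (y - a) * φ b := by linear_combination (φ a - φ b) * e

lemma convex_mem_of_between {S : Set ℝ} {φ : ℝ → ℝ} (hconv : ConvexOn ℝ S φ)
    {a b y : ℝ} (ha : a ∈ S) (hb : b ∈ S) (hab : a < b) (hy : y ∈ Set.Icc a b) :
    y ∈ S := by
  have hba : (0:ℝ) < b - a := by linarith
  obtain ⟨hay, hyb⟩ := hy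
  set t : ℝ := (b - y) / (b - a) with ht
  have ht0 : 0 ≤ t := div_nonneg (by linarith) hba.le
  have ht1 : t ≤ 1 := by rw [div_le_one hba]; linarith
  have e : t * (b - a) = b - y := by rw [ht]; exact div_mul_cancel₀ _ hba.ne'
  have hyc : t • a + (1 - t) • b = y := by simp only [smul_eq_mul]; linear_combination -e
  have := hconv.1 ha hb ht0 (show (0:ℝ) ≤ 1 - t by linarith)
    (show t + (1 - t) = 1 by ring)
  rwa [hyc] at this

lemma convex_chord_eq {S : Set ℝ} {φ : ℝ → ℝ} (hconv : ConvexOn ℝ S φ)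
    {a b x : ℝ} (ha : a ∈ S) (hb : b ∈ S) (hax : a < x) (hxb : x < b)
    (hx : φ x * (b - a) = (b - x) * φ a + (x - a) * φ b) :
    ∀ y ∈ Set.Icc a b, φ y * (b - a) = (b - y) * φ a + (y - a) * φ b := by
  have hab : a < b := hax.trans hxb
  have hba : (0:ℝ) < b - a := by linarith
  intro y hy
  obtain ⟨hay, hyb⟩ := hy
  have hymem : y ∈ S := convex_mem_of_between hconv ha hb hab ⟨hay, hyb⟩
  have hupper := convex_chord_le hconv ha hb hab y ⟨hay, hyb⟩
  have hlower : (b - y) * φ a + (y - a) * φ b ≤ φ y * (b - a) := by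
    rcases le_or_gt y x with hyx | hxy
    · have hyb' : (0:ℝ) < b - y := by linarith
      set μ : ℝ := (b - x) / (b - y) with hμ
      have hμ0 : 0 < μ := div_pos (by linarith) hyb'
      have hμ1 : μ ≤ 1 := by rw [div_le_one hyb']; linarith
      have e1 : μ * (b - y) = b - x := by rw [hμ]; exact div_mul_cancel₀ _ hyb'.ne'
      have hxc : μ • y + (1 - μ) • b = x := by simp only [smul_eq_mul]; linear_combination -e1
      have h1 := hconv.2 hymem hb hμ0.le (show (0:ℝ) ≤ 1 - μ by linarith)
        (show μ + (1 - μ) = 1 by ring)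
      rw [hxc] at h1
      have h2 : φ x ≤ μ * φ y + (1 - μ) * φ b := h1
      have h3 : φ x * (b - a) ≤ (μ * φ y + (1 - μ) * φ b) * (b - a) :=
        mul_le_mul_of_nonneg_right h2 hba.le
      rw [hx] at h3
      have key : μ * ((b - y) * φ a + (y - a) * φ b) ≤ μ * (φ y * (b - a)) := by
        have hident : (b - x) * φ a + (x - a) * φ b
            = μ * ((b - y) * φ a + (y - a) * φ b) + (1 - μ) * φ b * (b - a) := by
          linear_combination (φ b - φ a) * e1
        nlinarith [h3]
      exact le_of_mul_le_mul_left key hμ0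
    · have hya' : (0:ℝ) < y - a := by linarith
      set μ : ℝ := (x - a) / (y - a) with hμ
      have hμ0 : 0 < μ := div_pos (by linarith) hya'
      have hμ1 : μ ≤ 1 := by rw [div_le_one hya']; linarith
      have e2 : μ * (y - a) = x - a := by rw [hμ]; exact div_mul_cancel₀ _ hya'.ne'
      have hxc : (1 - μ) • a + μ • y = x := by simp only [smul_eq_mul]; linear_combination e2
      have h1 := hconv.2 ha hymem (show (0:ℝ) ≤ 1 - μ by linarith) hμ0.le
        (show (1 - μ) + μ = 1 by ring)
      rw [hxc] at h1
      have h2 : φ x ≤ (1 - μ) * φ a + μ * φ y := h1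
      have h3 : φ x * (b - a) ≤ ((1 - μ) * φ a + μ * φ y) * (b - a) :=
        mul_le_mul_of_nonneg_right h2 hba.le
      rw [hx] at h3
      have key : μ * ((b - y) * φ a + (y - a) * φ b) ≤ μ * (φ y * (b - a)) := by
        have hident : (b - x) * φ a + (x - a) * φ b
            = μ * ((b - y) * φ a + (y - a) * φ b) + (1 - μ) * φ a * (b - a) := by
          linear_combination (φ a - φ b) * e2
        nlinarith [h3]
      exact le_of_mul_le_mul_left key hμ0
  linarith

set_option maxHeartbeats 1600000 in

/-- Theorem 2(i): in the relaxed problem, if an optimizer has `y_r* > Z_{r-1}`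
then all earlier variables stick to their upper bounds, `y_s* = Z_s`.
(Indices are 0-based: piece `r` lives on `[Z r, Z (r+1)]` for `r < N`.) -/
theorem stmt_1
    (nw mdim N : ℕ) (hN : 1 ≤ N)
    (γ : (Fin nw → ℝ) → ℝ) (hγ : ConvexOn ℝ Set.univ γ)
    (Z : ℕ → ℝ) (hZ : ∀ r, r < N → Z r < Z (r + 1))
    (φ : ℝ → ℝ)
    (hφconv : ConvexOn ℝ (Set.Icc (Z 0) (Z N)) φ)
    (h f g : ℕ → ℝ)
    (hpw : ∀ r, r < N → ∀ z ∈ Set.Icc (Z r) (Z (r + 1)),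
      φ z = h r / 2 * z ^ 2 + f r * z + g r)
    (hnondeg : ∀ r, r + 1 < N → 0 < h r ∨ (f r, g r) ≠ (f (r + 1), g (r + 1)))
    (A : Fin mdim → ℝ) (B : Matrix (Fin mdim) (Fin nw) ℝ) (C : Fin mdim → ℝ)
    (wstar : Fin nw → ℝ) (ystar : ℕ → ℝ)
    (hfeas : (∀ r, r < N → ystar r ∈ Set.Icc (Z r) (Z (r + 1))) ∧
      ∀ j, A j * (Z 0 + ∑ r ∈ Finset.range N, (ystar r - Z r)) + B.mulVec wstar j ≤ C j)
    (hopt : ∀ (w : Fin nw → ℝ) (y : ℕ → ℝ),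
      ((∀ r, r < N → y r ∈ Set.Icc (Z r) (Z (r + 1))) ∧
        ∀ j, A j * (Z 0 + ∑ r ∈ Finset.range N, (y r - Z r)) + B.mulVec w j ≤ C j) →
      γ wstar + φ (Z 0) + ∑ r ∈ Finset.range N, (φ (ystar r) - φ (Z r)) ≤
        γ w + φ (Z 0) + ∑ r ∈ Finset.range N, (φ (y r) - φ (Z r))) :
    ∀ r, 1 ≤ r → r < N → Z r < ystar r → ∀ s, s < r → ystar s = Z (s + 1) := by
  -- monotonicity of Z up to index N
  have Zmono : ∀ j, j ≤ N → ∀ i, i ≤ j → Z i ≤ Z j := by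
    intro j hj
    induction j with
    | zero => intro i hi; interval_cases i; exact le_refl _
    | succ n ih =>
      intro i hi
      rcases Nat.eq_or_lt_of_le hi with heq | hlt
      · rw [heq]
      · exact le_trans (ih (by omega) i (by omega)) (hZ n (by omega)).le
  intro r hr1 hrN hyr s hsr
  by_contra hne
  have hsN : s < N := hsr.trans hrN
  have hs1N : s + 1 < N := by omega
  obtain ⟨hfs1, hfs2⟩ := hfeas.1 s hsN
  obtain ⟨hfr1, hfr2⟩ := hfeas.1 r hrN
  have ha_lt : ystar s < Z (s + 1) := lt_of_le_of_ne hfs2 hne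
  set a := ystar s with ha_def
  set b := ystar r with hb_def
  have hZsr : Z (s + 1) ≤ Z r := Zmono r hrN.le (s + 1) hsr
  set ε := min (Z (s + 1) - a) (b - Z r) with hε_def
  have hε0 : 0 < ε := lt_min (by linarith) (by linarith)
  have haε : a + ε ≤ Z (s + 1) := by
    have := min_le_left (Z (s + 1) - a) (b - Z r); linarith
  have hbε : Z r ≤ b - ε := by
    have := min_le_right (Z (s + 1) - a) (b - Z r); linarith
  have hab : a < b := by linarith
  have hba : (0:ℝ) < b - a := by linarith
  have hrs : r ≠ s := Nat.ne_of_gt hsr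
  set y' : ℕ → ℝ := fun t => if t = s then a + ε else if t = r then b - ε else ystar t
    with hy'_def
  have hy's : y' s = a + ε := by simp [hy'_def]
  have hy'r : y' r = b - ε := by simp [hy'_def, hrs]
  have hy'o : ∀ t, t ≠ s → t ≠ r → y' t = ystar t := by
    intro t h1 h2; simp [hy'_def, h1, h2]
  -- sum splitting
  have hsmem : s ∈ Finset.range N := Finset.mem_range.mpr hsN
  have hrmem : r ∈ (Finset.range N).erase s :=
    Finset.mem_erase.mpr ⟨hrs, Finset.mem_range.mpr hrN⟩
  have split : ∀ v : ℕ → ℝ, ∑ t ∈ Finset.range N, v t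
      = v s + v r + ∑ t ∈ ((Finset.range N).erase s).erase r, v t := by
    intro v
    rw [← Finset.add_sum_erase _ v hsmem, ← Finset.add_sum_erase _ v hrmem]
    ring
  have htail : ∀ v : ℕ → ℝ,
      ∑ t ∈ ((Finset.range N).erase s).erase r, (y' t - v t)
        = ∑ t ∈ ((Finset.range N).erase s).erase r, (ystar t - v t) := by
    intro v
    refine Finset.sum_congr rfl ?_
    intro t ht
    have h2 : t ≠ r := (Finset.mem_erase.mp ht).1
    have h1 : t ≠ s := (Finset.mem_erase.mp (Finset.mem_erase.mp ht).2).1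
    rw [hy'o t h1 h2]
  have hsum : ∑ t ∈ Finset.range N, (y' t - Z t)
      = ∑ t ∈ Finset.range N, (ystar t - Z t) := by
    rw [split (fun t => y' t - Z t), split (fun t => ystar t - Z t)]
    simp only [hy's, hy'r]
    rw [htail Z]
    ring
  -- feasibility of y'
  have hfeas' : ∀ t, t < N → y' t ∈ Set.Icc (Z t) (Z (t + 1)) := by
    intro t ht
    by_cases h1 : t = s
    · subst h1; rw [hy's]; exact ⟨by linarith, haε⟩
    · by_cases h2 : t = r
      · subst h2; rw [hy'r]; exact ⟨hbε, by linarith⟩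
      · rw [hy'o t h1 h2]; exact hfeas.1 t ht
  have hconstr' : ∀ j, A j * (Z 0 + ∑ t ∈ Finset.range N, (y' t - Z t))
      + B.mulVec wstar j ≤ C j := by
    intro j; rw [hsum]; exact hfeas.2 j
  -- optimality
  have hle := hopt wstar y' ⟨hfeas', hconstr'⟩
  have copt : φ a + φ b ≤ φ (a + ε) + φ (b - ε) := by
    rw [split (fun t => φ (ystar t) - φ (Z t)), split (fun t => φ (y' t) - φ (Z t))]
      at hle
    simp only [hy's, hy'r] at hle
    have htail2 : ∑ t ∈ ((Finset.range N).erase s).erase r, (φ (y' t) - φ (Z t))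
        = ∑ t ∈ ((Finset.range N).erase s).erase r, (φ (ystar t) - φ (Z t)) := by
      refine Finset.sum_congr rfl ?_
      intro t ht
      have h2 : t ≠ r := (Finset.mem_erase.mp ht).1
      have h1 : t ≠ s := (Finset.mem_erase.mp (Finset.mem_erase.mp ht).2).1
      rw [hy'o t h1 h2]
    rw [htail2] at hle
    linarith
  -- membership in the convexity domain
  have hZ0s : Z 0 ≤ Z s := Zmono s hsN.le 0 (Nat.zero_le _)
  have hZr1N : Z (r + 1) ≤ Z N := Zmono N (le_refl _) (r + 1) hrN
  have haS : a ∈ Set.Icc (Z 0) (Z N) := ⟨by linarith, by linarith⟩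
  have hbS : b ∈ Set.Icc (Z 0) (Z N) := ⟨by linarith, by linarith⟩
  -- chord inequalities at the two perturbed points
  have hord : a + ε ≤ b - ε := by linarith
  have c1 := convex_chord_le hφconv haS hbS hab (a + ε) ⟨by linarith, by linarith⟩
  have c2 := convex_chord_le hφconv haS hbS hab (b - ε) ⟨by linarith, by linarith⟩
  have coptm : (φ a + φ b) * (b - a) ≤ (φ (a + ε) + φ (b - ε)) * (b - a) :=
    mul_le_mul_of_nonneg_right copt hba.le
  have hxeq : φ (a + ε) * (b - a)
      = (b - (a + ε)) * φ a + ((a + ε) - a) * φ b := by nlinarith [c1, c2, coptm]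
  have hchord := convex_chord_eq hφconv haS hbS (by linarith : a < a + ε)
    (by linarith : a + ε < b) hxeq
  -- the affine function p z + q agrees with φ on [a,b]
  set p : ℝ := (φ b - φ a) / (b - a) with hp
  set q : ℝ := (b * φ a - a * φ b) / (b - a) with hq
  have haffine : ∀ y ∈ Set.Icc a b, φ y = p * y + q := by
    intro y hy
    have hc := hchord y hy
    rw [hp, hq]
    field_simp
    linarith [hc]
  -- left piece: on [a, Z (s+1)]
  have hleft := quad_eq_affine (h := h s) (f := f s) (g := g s) (p := p) (q := q)
    ha_lt (by
      intro z hz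
      obtain ⟨hz1, hz2⟩ := hz
      have hφz : φ z = h s / 2 * z ^ 2 + f s * z + g s :=
        hpw s hsN z ⟨by linarith, hz2⟩
      have haff : φ z = p * z + q := haffine z ⟨hz1, by linarith⟩
      rw [← hφz, haff])
  -- right piece: on [Z (s+1), min b (Z (s+2))]
  have hZs12 : Z (s + 1) < Z (s + 2) := hZ (s + 1) hs1N
  have hZ1b : Z (s + 1) < b := by linarith
  have hm : Z (s + 1) < min b (Z (s + 2)) := lt_min hZ1b hZs12
  have hright := quad_eq_affine (h := h (s+1)) (f := f (s+1)) (g := g (s+1))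
    (p := p) (q := q) hm (by
      intro z hz
      obtain ⟨hz1, hz2⟩ := hz
      have hz2b : z ≤ b := le_trans hz2 (min_le_left _ _)
      have hz2c : z ≤ Z (s + 2) := le_trans hz2 (min_le_right _ _)
      have hφz : φ z = h (s+1) / 2 * z ^ 2 + f (s+1) * z + g (s+1) :=
        hpw (s+1) hs1N z ⟨hz1, hz2c⟩
      have haff : φ z = p * z + q := haffine z ⟨by linarith, hz2b⟩
      rw [← hφz, haff])
  rcases hnondeg s hs1N with hpos | hne2
  · rw [hleft.1] at hpos; exact lt_irrefl 0 hpos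
  · exact hne2 (by rw [hleft.2.1, hleft.2.2, hright.2.1, hright.2.2])
end

section
/- Consider the relaxed problem: minimize over w ∈ ℝ^{n_w} and y₁,…,y_N ∈ ℝ the objective γ(w) + φ(Z₀) + Σ_{r=1}^{N} [φ(y_r) − φ(Z_{r−1})], subject to Z_{r−1} ≤ y_r ≤ Z_r for r = 1,…,N and Ā·(Z₀ + Σ_{r=1}^{N}[y_r − Z_{r−1}]) + B̄ w ≤ C̄ componentwise. Let (w*, y₁*,…,y_N*) be an optimizer of this problem and define z* := Z₀ + Σ_{r=1}^{N}[y_r* − Z_{r−1}]. Then (w*, z*) is an optimizer of the problem: minimize γ(w) + φ(z) over w ∈ ℝ^{n_w} and z ∈ ℝ subject to Z₀ ≤ z ≤ Z_N and Ā z + B̄ w ≤ C̄ componentwise; i.e., (w*, z*) is feasible for the latter problem and γ(w*) + φ(z*) ≤ γ(w) + φ(z) for every feasible (w, z). -/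
/-- Four point convexity inequality: if `a ≤ b`, `a ≤ c`, `a + d = b + c`,
all points in the convex set `s`, then `φ b + φ c ≤ φ a + φ d`. -/
lemma four_point_aux {φ : ℝ → ℝ} {s : Set ℝ} (hconv : ConvexOn ℝ s φ)
    {a b c d : ℝ} (ha : a ∈ s) (hd : d ∈ s)
    (hab : a ≤ b) (hac : a ≤ c) (hsum : a + d = b + c) :
    φ b + φ c ≤ φ a + φ d := by
  rcases eq_or_lt_of_le (le_trans hab (by linarith : b ≤ d)) with had | had
  · have hb : b = a := by linarith
    have hc : c = a := by linarith
    rw [hb, hc, ← had]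
  · set t : ℝ := (b - a) / (d - a) with ht
    have hda : 0 < d - a := by linarith
    have ht0 : 0 ≤ t := div_nonneg (by linarith) hda.le
    have ht1 : t ≤ 1 := by rw [div_le_one hda]; linarith
    have h1 := hconv.2 ha hd (by linarith : (0:ℝ) ≤ 1 - t) ht0 (by ring)
    have h2 := hconv.2 ha hd ht0 (by linarith : (0:ℝ) ≤ 1 - t) (by ring)
    simp only [smul_eq_mul] at h1 h2
    have hne : d - a ≠ 0 := ne_of_gt hda
    have hb' : (1 - t) * a + t * d = b := by rw [ht]; field_simp; ring
    have hc' : t * a + (1 - t) * d = c := by rw [ht]; field_simp; nlinarith [hsum]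
    rw [hb'] at h1
    rw [hc'] at h2
    linarith

/-- Theorem 2(iii): from an optimizer of the relaxed problem, the point
`z* = Z₀ + Σ_{r}(y_r* - Z_{r-1})` together with `w*` is an optimizer of the
original problem `min γ(w) + φ(z)` s.t. `Z₀ ≤ z ≤ Z_N`, `Ā z + B̄ w ≤ C̄`.
(Indices are 0-based: piece `r` lives on `[Z r, Z (r+1)]` for `r < N`.) -/
theorem stmt_3
    (nw mdim N : ℕ) (hN : 1 ≤ N)
    (γ : (Fin nw → ℝ) → ℝ) (hγ : ConvexOn ℝ Set.univ γ)
    (Z : ℕ → ℝ) (hZ : ∀ r, r < N → Z r < Z (r + 1))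
    (φ : ℝ → ℝ)
    (hφconv : ConvexOn ℝ (Set.Icc (Z 0) (Z N)) φ)
    (h f g : ℕ → ℝ)
    (hpw : ∀ r, r < N → ∀ z ∈ Set.Icc (Z r) (Z (r + 1)),
      φ z = h r / 2 * z ^ 2 + f r * z + g r)
    (hnondeg : ∀ r, r + 1 < N → 0 < h r ∨ (f r, g r) ≠ (f (r + 1), g (r + 1)))
    (A : Fin mdim → ℝ) (B : Matrix (Fin mdim) (Fin nw) ℝ) (C : Fin mdim → ℝ)
    (wstar : Fin nw → ℝ) (ystar : ℕ → ℝ)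
    (hfeas : (∀ r, r < N → ystar r ∈ Set.Icc (Z r) (Z (r + 1))) ∧
      ∀ j, A j * (Z 0 + ∑ r ∈ Finset.range N, (ystar r - Z r)) + B.mulVec wstar j ≤ C j)
    (hopt : ∀ (w : Fin nw → ℝ) (y : ℕ → ℝ),
      ((∀ r, r < N → y r ∈ Set.Icc (Z r) (Z (r + 1))) ∧
        ∀ j, A j * (Z 0 + ∑ r ∈ Finset.range N, (y r - Z r)) + B.mulVec w j ≤ C j) →
      γ wstar + φ (Z 0) + ∑ r ∈ Finset.range N, (φ (ystar r) - φ (Z r)) ≤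
        γ w + φ (Z 0) + ∑ r ∈ Finset.range N, (φ (y r) - φ (Z r))) :
    (Z 0 ≤ Z 0 + ∑ r ∈ Finset.range N, (ystar r - Z r) ∧
      Z 0 + ∑ r ∈ Finset.range N, (ystar r - Z r) ≤ Z N ∧
      ∀ j, A j * (Z 0 + ∑ r ∈ Finset.range N, (ystar r - Z r)) + B.mulVec wstar j ≤ C j) ∧
    ∀ (w : Fin nw → ℝ) (z : ℝ), Z 0 ≤ z → z ≤ Z N →
      (∀ j, A j * z + B.mulVec w j ≤ C j) →
      γ wstar + φ (Z 0 + ∑ r ∈ Finset.range N, (ystar r - Z r)) ≤ γ w + φ z := by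
  -- monotonicity of Z up to index N
  have hmonoZ : ∀ p q : ℕ, p ≤ q → q ≤ N → Z p ≤ Z q := by
    intro p q hpq hqN
    induction q with
    | zero => rw [Nat.le_zero.mp hpq]
    | succ n ih =>
      rcases Nat.lt_or_ge p (n + 1) with hp | hp
      · have h1 : Z p ≤ Z n := ih (by omega) (by omega)
        have h2 : Z n < Z (n + 1) := hZ n (by omega)
        linarith
      · have : p = n + 1 := by omega
        rw [this]
  -- key inequality for any relaxed-feasible y, by induction on the prefix length
  have key : ∀ (y : ℕ → ℝ), (∀ r, r < N → y r ∈ Set.Icc (Z r) (Z (r + 1))) →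
      ∀ k, k ≤ N →
      Z 0 ≤ Z 0 + ∑ r ∈ Finset.range k, (y r - Z r) ∧
      Z 0 + ∑ r ∈ Finset.range k, (y r - Z r) ≤ Z k ∧
      φ (Z 0 + ∑ r ∈ Finset.range k, (y r - Z r)) ≤
        φ (Z 0) + ∑ r ∈ Finset.range k, (φ (y r) - φ (Z r)) := by
    intro y hy k hkN
    induction k with
    | zero => simp
    | succ n ih =>
      obtain ⟨ih1, ih2, ih3⟩ := ih (by omega)
      have hn : n < N := by omega
      obtain ⟨hyl, hyu⟩ := hy n hn
      set T := Z 0 + ∑ r ∈ Finset.range n, (y r - Z r) with hT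
      have hTmem : T ∈ Set.Icc (Z 0) (Z N) :=
        ⟨ih1, le_trans ih2 (hmonoZ n N (by omega) le_rfl)⟩
      have hTd : T + (y n - Z n) ≤ y n := by linarith
      have hyNmem : y n ∈ Set.Icc (Z 0) (Z N) :=
        ⟨le_trans (hmonoZ 0 n (by omega) (by omega)) hyl,
         le_trans hyu (hmonoZ (n + 1) N (by omega) le_rfl)⟩
      have hfour : φ (T + (y n - Z n)) + φ (Z n) ≤ φ T + φ (y n) :=
        four_point_aux hφconv hTmem hyNmem (by linarith) ih2 (by ring)
      refine ⟨?_, ?_, ?_⟩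
      · rw [Finset.sum_range_succ]
        have : Z 0 ≤ T + (y n - Z n) := by linarith
        linarith [this]
      · rw [Finset.sum_range_succ]
        have : T + (y n - Z n) ≤ Z (n + 1) := le_trans hTd hyu
        linarith [this]
      · rw [Finset.sum_range_succ, Finset.sum_range_succ]
        have heq : Z 0 + (∑ r ∈ Finset.range n, (y r - Z r) + (y n - Z n))
            = T + (y n - Z n) := by rw [hT]; ring
        rw [heq]
        linarith
  obtain ⟨hk1, hk2, hk3⟩ := key ystar hfeas.1 N le_rfl
  refine ⟨⟨hk1, hk2, hfeas.2⟩, ?_⟩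
  intro w z hz0 hzN hAz
  -- clamp construction
  set y : ℕ → ℝ := fun r => max (Z r) (min z (Z (r + 1))) with hy
  have hyfeas : ∀ r, r < N → y r ∈ Set.Icc (Z r) (Z (r + 1)) := by
    intro r hr
    exact ⟨le_max_left _ _, max_le (hZ r hr).le (min_le_right _ _)⟩
  have hterm1 : ∀ r ∈ Finset.range N, y r - Z r = min z (Z (r + 1)) - min z (Z r) := by
    intro r hr
    rw [Finset.mem_range] at hr
    rcases le_total z (Z r) with hzr | hzr
    · have h1 : min z (Z r) = z := min_eq_left hzr
      have h2 : min z (Z (r + 1)) = z := min_eq_left (le_trans hzr (hZ r hr).le)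
      have h3 : y r = Z r := by
        rw [hy]; simp only [h2]; exact max_eq_left hzr
      rw [h1, h2, h3]; ring
    · have h1 : min z (Z r) = Z r := min_eq_right hzr
      have h3 : y r = min z (Z (r + 1)) := by
        rw [hy]
        exact max_eq_right (le_min hzr (hZ r hr).le)
      rw [h1, h3]
  have hterm2 : ∀ r ∈ Finset.range N,
      φ (y r) - φ (Z r) = φ (min z (Z (r + 1))) - φ (min z (Z r)) := by
    intro r hr
    rw [Finset.mem_range] at hr
    rcases le_total z (Z r) with hzr | hzr
    · have h1 : min z (Z r) = z := min_eq_left hzr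
      have h2 : min z (Z (r + 1)) = z := min_eq_left (le_trans hzr (hZ r hr).le)
      have h3 : y r = Z r := by
        rw [hy]; simp only [h2]; exact max_eq_left hzr
      rw [h1, h2, h3]; ring
    · have h1 : min z (Z r) = Z r := min_eq_right hzr
      have h3 : y r = min z (Z (r + 1)) := by
        rw [hy]
        exact max_eq_right (le_min hzr (hZ r hr).le)
      rw [h1, h3]
  have hminN : min z (Z N) = z := min_eq_left hzN
  have hmin0 : min z (Z 0) = Z 0 := min_eq_right hz0
  have hsum1 : ∑ r ∈ Finset.range N, (y r - Z r) = z - Z 0 := by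
    rw [Finset.sum_congr rfl hterm1,
      Finset.sum_range_sub (fun r => min z (Z r)), hminN, hmin0]
  have hsum2 : ∑ r ∈ Finset.range N, (φ (y r) - φ (Z r)) = φ z - φ (Z 0) := by
    rw [Finset.sum_congr rfl hterm2,
      Finset.sum_range_sub (fun r => φ (min z (Z r))), hminN, hmin0]
  have hyconstr : ∀ j, A j * (Z 0 + ∑ r ∈ Finset.range N, (y r - Z r))
      + B.mulVec w j ≤ C j := by
    intro j
    rw [hsum1]
    have : Z 0 + (z - Z 0) = z := by ring
    rw [this]
    exact hAz j
  have hcmp := hopt w y ⟨hyfeas, hyconstr⟩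
  rw [hsum2] at hcmp
  linarith
end

section
/- Let n ≥ 1 and let b, d, a, l, u ∈ ℝⁿ with b_i > 0, d_i > 0, l_i ≤ u_i for all i, and let c ∈ ℝ satisfy Σ b_i l_i < c < Σ b_i u_i. Define x_i(λ) := clamp((a_i − λ b_i)/d_i, l_i, u_i) and g(λ) := Σ_{i=1}^{n} b_i x_i(λ), and set Λ* := {λ ∈ ℝ : g(λ) = c}. Then Λ* is a nonempty compact interval: there exist λ_l* ≤ λ_u* with Λ* = [λ_l*, λ_u*]. Moreover, g(λ) > c if and only if λ < λ_l*, and g(λ) < c if and only if λ > λ_u*. -/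
/-- The optimal dual set (14) of the continuous quadratic knapsack problem:
if `bᵀl < c < bᵀu`, then `Λ* = {λ : g(λ) = c}` is a nonempty compact interval
`[λ_l*, λ_u*]`; moreover `g(λ) > c ↔ λ < λ_l*` and `g(λ) < c ↔ λ > λ_u*`. -/
theorem stmt_10 (n : ℕ) (hn : 1 ≤ n) (b d a l u : Fin n → ℝ)
    (hb : ∀ i, 0 < b i) (hd : ∀ i, 0 < d i) (hlu : ∀ i, l i ≤ u i)
    (c : ℝ) (hcl : ∑ i, b i * l i < c) (hcu : c < ∑ i, b i * u i)
    (g : ℝ → ℝ)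
    (hg : ∀ lam, g lam = ∑ i, b i * max (l i) (min ((a i - lam * b i) / d i) (u i))) :
    ∃ lamL lamU : ℝ, lamL ≤ lamU ∧
      {lam : ℝ | g lam = c} = Set.Icc lamL lamU ∧
      (∀ lam, c < g lam ↔ lam < lamL) ∧
      (∀ lam, g lam < c ↔ lamU < lam) := by
  have hne : Nonempty (Fin n) := ⟨⟨0, hn⟩⟩
  have huniv : (Finset.univ : Finset (Fin n)).Nonempty := Finset.univ_nonempty
  -- g is antitone
  have hanti : Antitone g := by
    intro x y hxy
    rw [hg, hg]
    apply Finset.sum_le_sum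
    intro i _
    have hbi := hb i
    have hdi := hd i
    have h1 : (a i - y * b i) / d i ≤ (a i - x * b i) / d i := by
      gcongr <;> nlinarith
    exact mul_le_mul_of_nonneg_left
      (max_le_max le_rfl (min_le_min h1 le_rfl)) (hb i).le
  -- g is continuous
  have hcont : Continuous g := by
    have : g = fun lam => ∑ i, b i * max (l i) (min ((a i - lam * b i) / d i) (u i)) :=
      funext hg
    rw [this]
    apply continuous_finset_sum
    intro i _
    exact continuous_const.mul ((continuous_const.max
      (((continuous_const.sub (continuous_id.mul continuous_const)).div_const _).min
        continuous_const)))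
  -- large lambda gives lower sum
  set lamhi := Finset.univ.sup' huniv (fun i => (a i - d i * l i) / b i) with hlamhi
  set lamlo := Finset.univ.inf' huniv (fun i => (a i - d i * u i) / b i) with hlamlo
  have ghi : g lamhi = ∑ i, b i * l i := by
    rw [hg]
    apply Finset.sum_congr rfl
    intro i _
    congr 1
    have h1 : (a i - d i * l i) / b i ≤ lamhi := Finset.le_sup' (fun i => (a i - d i * l i) / b i) (Finset.mem_univ i)
    have h2 : (a i - lamhi * b i) / d i ≤ l i := by
      rw [div_le_iff₀ (hd i)]
      rw [div_le_iff₀ (hb i)] at h1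
      nlinarith
    have : min ((a i - lamhi * b i) / d i) (u i) ≤ l i := le_trans (min_le_left _ _) h2
    exact max_eq_left this
  have glo : g lamlo = ∑ i, b i * u i := by
    rw [hg]
    apply Finset.sum_congr rfl
    intro i _
    have h1 : lamlo ≤ (a i - d i * u i) / b i := Finset.inf'_le (fun i => (a i - d i * u i) / b i) (Finset.mem_univ i)
    have h2 : u i ≤ (a i - lamlo * b i) / d i := by
      rw [le_div_iff₀ (hd i)]
      rw [le_div_iff₀ (hb i)] at h1
      nlinarith
    have hmin : min ((a i - lamlo * b i) / d i) (u i) = u i := min_eq_right h2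
    rw [hmin, max_eq_right (hlu i)]
  have hlole : lamlo ≤ lamhi := by
    by_contra h
    push_neg at h
    have := hanti h.le
    rw [ghi, glo] at this
    linarith
  -- IVT
  have hmem : c ∈ Set.Icc (g lamhi) (g lamlo) := by
    rw [ghi, glo]; exact ⟨hcl.le, hcu.le⟩
  obtain ⟨lam0, _, hlam0⟩ := intermediate_value_Icc' hlole hcont.continuousOn hmem
  set S : Set ℝ := {lam : ℝ | g lam = c} with hS
  have hSne : S.Nonempty := ⟨lam0, hlam0⟩
  have hSsub : S ⊆ Set.Icc lamlo lamhi := by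
    intro x hx
    constructor
    · by_contra h
      push_neg at h
      have := hanti h.le
      rw [glo] at this
      rw [hS, Set.mem_setOf_eq] at hx
      linarith
    · by_contra h
      push_neg at h
      have := hanti h.le
      rw [ghi] at this
      rw [hS, Set.mem_setOf_eq] at hx
      linarith
  have hbdd : BddBelow S ∧ BddAbove S :=
    ⟨⟨lamlo, fun x hx => (hSsub hx).1⟩, ⟨lamhi, fun x hx => (hSsub hx).2⟩⟩
  have hclosed : IsClosed S := by
    have : S = g ⁻¹' {c} := rfl
    rw [this]
    exact isClosed_singleton.preimage hcont
  set lamL := sInf S with hlamL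
  set lamU := sSup S with hlamU
  have hLmem : lamL ∈ S := hclosed.csInf_mem hSne hbdd.1
  have hUmem : lamU ∈ S := hclosed.csSup_mem hSne hbdd.2
  have hLU : lamL ≤ lamU := csInf_le_csSup hSne hbdd.1 hbdd.2
  have hgL : g lamL = c := hLmem
  have hgU : g lamU = c := hUmem
  have hSIcc : S = Set.Icc lamL lamU := by
    apply Set.Subset.antisymm
    · intro x hx
      exact ⟨csInf_le hbdd.1 hx, le_csSup hbdd.2 hx⟩
    · intro x hx
      have h1 : g x ≤ c := by rw [← hgL]; exact hanti hx.1
      have h2 : c ≤ g x := by rw [← hgU]; exact hanti hx.2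
      exact le_antisymm h1 h2
  refine ⟨lamL, lamU, hLU, hSIcc, ?_, ?_⟩
  · intro lam
    constructor
    · intro h
      by_contra hcon
      push_neg at hcon
      rcases eq_or_lt_of_le hcon with heq | hlt
      · have : g lam = c := heq ▸ hgL
        linarith
      · have : g lam ≤ g lamL := hanti hlt.le
        rw [hgL] at this
        linarith
    · intro h
      have hge : c ≤ g lam := by rw [← hgL]; exact hanti h.le
      rcases eq_or_lt_of_le hge with heq | hlt
      · have : lam ∈ S := heq.symm
        have := csInf_le hbdd.1 this
        linarith
      · exact hlt
  · intro lam
    constructor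
    · intro h
      by_contra hcon
      push_neg at hcon
      have : g lamU ≤ g lam := hanti hcon
      rw [hgU] at this
      linarith
    · intro h
      have hle : g lam ≤ c := by rw [← hgU]; exact hanti h.le
      rcases eq_or_lt_of_le hle with heq | hlt
      · have : lam ∈ S := heq
        have := le_csSup hbdd.2 this
        linarith
      · exact hlt
end

section
/- Let n, m ≥ 1, let d, a, l, u ∈ ℝⁿ with d_i > 0 and l_i ≤ u_i for all i, let B ∈ ℝ^{m×n} with columns B_i ∈ ℝ^m, and let c ∈ ℝ^m. Suppose λ* ∈ ℝ^m is such that the point x* defined by x_i* := clamp((a_i − (λ*)ᵀB_i)/d_i, l_i, u_i) satisfies B x* = c. Then x* is a global minimizer of the problem: minimize ½ Σ_{i=1}^{n} d_i x_i² − Σ_{i=1}^{n} a_i x_i over all x ∈ ℝⁿ with l_i ≤ x_i ≤ u_i for all i and B x = c. -/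
lemma hps_key (d b l u t : ℝ) (hd : 0 < d) (hl : l ≤ t) (hu : t ≤ u) :
    (1/2) * d * (max l (min (b/d) u))^2 - b * (max l (min (b/d) u)) ≤
      (1/2) * d * t^2 - b * t := by
  set s := max l (min (b/d) u) with hs
  rcases le_or_gt (b/d) l with h1 | h1
  · have hmin : min (b/d) u ≤ l := le_trans (min_le_left _ _) h1
    have hsl : s = l := by rw [hs, max_eq_left hmin]
    have hb : b ≤ d * l := by
      have := (div_le_iff₀ hd).mp h1
      linarith
    rw [hsl]
    nlinarith [sq_nonneg (t - l), mul_nonneg (sub_nonneg.mpr hb) (sub_nonneg.mpr hl)]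
  · rcases le_or_gt (b/d) u with h2 | h2
    · have hsl : s = b/d := by
        rw [hs, min_eq_left h2, max_eq_right h1.le]
      rw [hsl]
      have hb : d * (b/d) = b := by field_simp
      nlinarith [sq_nonneg (t - b/d)]
    · have hsl : s = u := by
        rw [hs, min_eq_right h2.le, max_eq_right (le_trans hl hu)]
      have hb : d * u ≤ b := by
        have := (le_div_iff₀ hd).mp h2.le
        linarith
      rw [hsl]
      nlinarith [sq_nonneg (t - u), mul_nonneg (sub_nonneg.mpr hb) (sub_nonneg.mpr hu)]

/-- Correctness of the final step of the HPS algorithm: if `λ*` is such that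
`x*` with `x_i* = clamp((a_i − (λ*)ᵀB_i)/d_i, l_i, u_i)` satisfies `Bx* = c`,
then `x*` is a global minimizer of the multiply constrained continuous
quadratic knapsack problem (9). -/
theorem stmt_12 (n m : ℕ) (hn : 1 ≤ n) (hm : 1 ≤ m)
    (d a l u : Fin n → ℝ) (hd : ∀ i, 0 < d i) (hlu : ∀ i, l i ≤ u i)
    (B : Matrix (Fin m) (Fin n) ℝ) (c : Fin m → ℝ)
    (lamstar : Fin m → ℝ) (xstar : Fin n → ℝ)
    (hx : ∀ i, xstar i =
      max (l i) (min ((a i - ∑ j, lamstar j * B j i) / d i) (u i)))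
    (hcoup : B.mulVec xstar = c) :
    (∀ i, l i ≤ xstar i ∧ xstar i ≤ u i) ∧
    ∀ x : Fin n → ℝ, (∀ i, l i ≤ x i ∧ x i ≤ u i) → B.mulVec x = c →
      (1 / 2) * ∑ i, d i * xstar i ^ 2 - ∑ i, a i * xstar i ≤
        (1 / 2) * ∑ i, d i * x i ^ 2 - ∑ i, a i * x i := by
  set b : Fin n → ℝ := fun i => a i - ∑ j, lamstar j * B j i with hb
  have hfeas : ∀ i, l i ≤ xstar i ∧ xstar i ≤ u i := by
    intro i
    rw [hx i]
    exact ⟨le_max_left _ _, max_le (hlu i) (min_le_right _ _)⟩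
  refine ⟨hfeas, ?_⟩
  have expand : ∀ x : Fin n → ℝ, B.mulVec x = c →
      (1/2) * ∑ i, d i * x i ^ 2 - ∑ i, a i * x i
        = (∑ i, ((1/2) * d i * x i ^ 2 - b i * x i)) - ∑ j, lamstar j * c j := by
    intro x hxc
    have hcross : ∑ i, (∑ j, lamstar j * B j i) * x i = ∑ j, lamstar j * c j := by
      have : ∀ j, B.mulVec x j = c j := fun j => congrFun hxc j
      simp only [Finset.sum_mul]
      rw [Finset.sum_comm]
      refine Finset.sum_congr rfl fun j _ => ?_
      rw [← this j, Matrix.mulVec, dotProduct, Finset.mul_sum]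
      exact Finset.sum_congr rfl fun i _ => by ring
    have h2 : ∑ i, b i * x i = ∑ i, a i * x i - ∑ j, lamstar j * c j := by
      simp only [hb, sub_mul]
      rw [Finset.sum_sub_distrib, hcross]
    rw [Finset.sum_sub_distrib, h2]
    have h3 : ∑ i, (1:ℝ)/2 * d i * x i ^ 2 = (1/2) * ∑ i, d i * x i ^ 2 := by
      rw [Finset.mul_sum]
      exact Finset.sum_congr rfl fun i _ => by ring
    rw [h3]; ring
  intro x hxb hxc
  rw [expand xstar hcoup, expand x hxc]
  apply sub_le_sub_right
  apply Finset.sum_le_sum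
  intro i _
  rw [hx i]
  exact hps_key (d i) (b i) (l i) (u i) (x i) (hd i) (hxb i).1 (hxb i).2
end

section
/- Let φ : ℝ^m → ℝ be a concave function, let p ∈ ℝ^m with p ≠ 0 and p₀ ∈ ℝ, and let 𝒫 = {λ ∈ ℝ^m : p₀ + pᵀλ = 0} be a hyperplane. Suppose λ_𝒫 ∈ 𝒫 maximizes φ over 𝒫 (i.e., φ(μ) ≤ φ(λ_𝒫) for all μ ∈ 𝒫), and suppose there exists ε > 0 with φ(λ_𝒫 + ε p) > φ(λ_𝒫). Then every global maximizer λ* of φ over ℝ^m satisfies p₀ + pᵀλ* > 0. -/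
/-- The oracle's sign deduction (Algorithm 3): if a concave `φ` restricted to
the hyperplane `𝒫 = {λ : p₀ + pᵀλ = 0}` is maximized at `λ_𝒫`, and `φ` strictly
increases from `λ_𝒫` in the direction `p`, then every global maximizer of `φ`
lies strictly on the positive side of `𝒫`. -/
theorem stmt_13 (m : ℕ) (φ : (Fin m → ℝ) → ℝ)
    (hconc : ConcaveOn ℝ Set.univ φ)
    (p : Fin m → ℝ) (hp : p ≠ 0) (p0 : ℝ)
    (lamP : Fin m → ℝ) (hlamP : p0 + ∑ j, p j * lamP j = 0)
    (hmax : ∀ μ : Fin m → ℝ, p0 + ∑ j, p j * μ j = 0 → φ μ ≤ φ lamP)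
    (ε : ℝ) (hε : 0 < ε) (hinc : φ lamP < φ (lamP + ε • p)) :
    ∀ lamstar : Fin m → ℝ, (∀ μ : Fin m → ℝ, φ μ ≤ φ lamstar) →
      0 < p0 + ∑ j, p j * lamstar j := by
  intro lamstar hstar
  by_contra hle
  push_neg at hle
  set y : Fin m → ℝ := lamP + ε • p with hy
  set a : ℝ := p0 + ∑ j, p j * lamstar j with ha
  obtain ⟨j0, hj0⟩ : ∃ j, p j ≠ 0 := Function.ne_iff.mp hp
  have hsq : 0 < ∑ j, p j * p j :=
    Finset.sum_pos' (fun j _ => mul_self_nonneg _)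
      ⟨j0, Finset.mem_univ j0, mul_self_pos.mpr hj0⟩
  have hb : p0 + ∑ j, p j * y j = ε * ∑ j, p j * p j := by
    have h : ∀ j, p j * y j = p j * lamP j + ε * (p j * p j) := by
      intro j
      simp only [hy, Pi.add_apply, Pi.smul_apply, smul_eq_mul]
      ring
    rw [Finset.sum_congr rfl (fun j _ => h j), Finset.sum_add_distrib,
      ← Finset.mul_sum]
    linarith [hlamP]
  set b : ℝ := ε * ∑ j, p j * p j with hbdef
  have hbpos : 0 < b := mul_pos hε hsq
  set t : ℝ := -a / (b - a) with ht
  set s : ℝ := b / (b - a) with hs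
  have hba : 0 < b - a := by linarith
  have htpos : 0 ≤ t := div_nonneg (by linarith) hba.le
  have hspos : 0 < s := div_pos hbpos hba
  have hst : s + t = 1 := by
    rw [hs, ht]; field_simp; ring
  set μ : Fin m → ℝ := s • lamstar + t • y with hμ
  have hμP : p0 + ∑ j, p j * μ j = 0 := by
    have hsum : ∑ j, p j * μ j =
        s * (∑ j, p j * lamstar j) + t * (∑ j, p j * y j) := by
      rw [Finset.mul_sum, Finset.mul_sum, ← Finset.sum_add_distrib]
      refine Finset.sum_congr rfl (fun j _ => ?_)
      simp only [hμ, Pi.add_apply, Pi.smul_apply, smul_eq_mul]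
      ring
    rw [hsum]
    have h1 : ∑ j, p j * lamstar j = a - p0 := by rw [ha]; ring
    have h2 : ∑ j, p j * y j = b - p0 := by rw [← hb]; ring
    rw [h1, h2]
    have hzero : s * a + t * b = 0 := by
      rw [hs, ht]; field_simp; ring
    have hkey : p0 + (s * (a - p0) + t * (b - p0)) =
        (s * a + t * b) + (1 - (s + t)) * p0 := by ring
    rw [hkey, hst, hzero]; ring
  have hφμ : s * φ lamstar + t * φ y ≤ φ μ :=
    hconc.2 (Set.mem_univ lamstar) (Set.mem_univ y) hspos.le htpos hst
  have hineq : φ y ≤ φ μ := by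
    have h1 : φ y ≤ φ lamstar := hstar y
    have h2 := mul_le_mul_of_nonneg_left h1 hspos.le
    have h3 : s * φ y + t * φ y = φ y := by rw [← add_mul, hst, one_mul]
    linarith
  have := hmax μ hμP
  have : φ y ≤ φ lamP := le_trans hineq this
  exact absurd hinc (not_lt.mpr this)
end

section
/- For i = 1,…,M let N_i ≥ 1, let I_{i,0} < I_{i,1} < … < I_{i,N_i} be real numbers, and let J̃_i : ℝ → ℝ be convex on [I_{i,0}, I_{i,N_i}] and piecewise quadratic: J̃_i(θ) = ½ h_{i,r} θ² + f_{i,r} θ + g_{i,r} whenever θ ∈ [I_{i,r−1}, I_{i,r}], with the non-degeneracy condition h_{i,r} > 0 ∨ (f_{i,r}, g_{i,r}) ≠ (f_{i,r+1}, g_{i,r+1}) for all r ∈ {1,…,N_i−1}. Let a_{i,j}, b_j ∈ ℝ for j = 1,…,m. Consider the separable quadratic program (P'): minimize Σ_{i=1}^{M} Σ_{r=1}^{N_i} [½ h_{i,r} θ_{i,r}² + (h_{i,r} I_{i,r−1} + f_{i,r}) θ_{i,r}] over variables θ_{i,r} subject to 0 ≤ θ_{i,r} ≤ I_{i,r} −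 I_{i,r−1} for all i, r, and Σ_{i=1}^{M} a_{i,j} (I_{i,0} + Σ_{r=1}^{N_i} θ_{i,r}) = b_j for j = 1,…,m. If (θ*_{i,r}) is an optimizer of (P'), then Θ* defined by Θ_i* := I_{i,0} + Σ_{r=1}^{N_i} θ*_{i,r} is an optimizer of the coordination problem (P): minimize Σ_{i=1}^{M} J̃_i(Θ_i) over Θ ∈ ℝ^M subject to I_{i,0} ≤ Θ_i ≤ I_{i,N_i} for all i and Σ_{i=1}^{M} a_{i,j} Θ_i = b_j for j = 1,…,m. -/
private lemma convex_incr {D : Set ℝ} {J : ℝ → ℝ} (hJ : ConvexOn ℝ D J)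
    {x y t : ℝ} (hx : x ∈ D) (hyt : y + t ∈ D) (hxy : x ≤ y) (ht : 0 ≤ t) :
    J (x + t) + J y ≤ J x + J (y + t) := by
  rcases eq_or_lt_of_le (show x ≤ y + t by linarith) with he | hlt
  · have ht0 : t = 0 := by linarith
    have hxy2 : x = y := by linarith
    rw [ht0, hxy2, add_zero]
  · have hdpos : (0:ℝ) < y + t - x := by linarith
    set l : ℝ := t / (y + t - x) with hl
    have hld : l * (y + t - x) = t := div_mul_cancel₀ t (ne_of_gt hdpos)
    have hl0 : 0 ≤ l := div_nonneg ht hdpos.le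
    have hl1 : l ≤ 1 := by rw [hl, div_le_one hdpos]; linarith
    have h1 := hJ.2 hx hyt (show (0:ℝ) ≤ 1 - l by linarith) hl0 (by ring)
    have h2 := hJ.2 hx hyt hl0 (show (0:ℝ) ≤ 1 - l by linarith) (by ring)
    simp only [smul_eq_mul] at h1 h2
    have e1 : (1 - l) * x + l * (y + t) = x + t := by linear_combination hld
    have e2 : l * x + (1 - l) * (y + t) = y := by linear_combination -hld
    rw [e1] at h1
    rw [e2] at h2
    have h3 := add_le_add h1 h2
    have h4 : (1 - l) * J x + l * J (y + t) + (l * J x + (1 - l) * J (y + t))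
        = J x + J (y + t) := by ring
    linarith

private lemma sum_incr_ge {Nn : ℕ} {I : ℕ → ℝ} {J : ℝ → ℝ}
    (hI : ∀ r < Nn, I r < I (r + 1))
    (hJ : ConvexOn ℝ (Set.Icc (I 0) (I Nn)) J)
    {θ : ℕ → ℝ} (hθ : ∀ r < Nn, 0 ≤ θ r ∧ θ r ≤ I (r + 1) - I r) :
    J (I 0 + ∑ r ∈ Finset.range Nn, θ r) - J (I 0) ≤
      ∑ r ∈ Finset.range Nn, (J (I r + θ r) - J (I r)) := by
  have hmono : ∀ r s : ℕ, r ≤ s → s ≤ Nn → I r ≤ I s := by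
    intro r s hrs hs
    induction s with
    | zero => simp_all
    | succ n ih =>
      rcases Nat.lt_or_ge r (n + 1) with hc | hc
      · have hrn : r ≤ n := Nat.lt_succ_iff.mp hc
        exact le_trans (ih hrn (le_trans (Nat.le_succ n) hs))
          (le_of_lt (hI n (by omega)))
      · have : r = n + 1 := le_antisymm hrs hc
        simp [this]
  have key : ∀ k, k ≤ Nn → J (I 0 + ∑ r ∈ Finset.range k, θ r) - J (I 0) ≤
      ∑ r ∈ Finset.range k, (J (I r + θ r) - J (I r)) := by
    intro k
    induction k with
    | zero => simp
    | succ n ih =>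
      intro hk
      have hnlt : n < Nn := hk
      have ihn := ih (le_of_lt hnlt)
      have hS0 : 0 ≤ ∑ r ∈ Finset.range n, θ r :=
        Finset.sum_nonneg fun r hr => (hθ r (lt_of_lt_of_le (Finset.mem_range.mp hr) hnlt.le)).1
      have hSb : ∑ r ∈ Finset.range n, θ r ≤ I n - I 0 := by
        calc ∑ r ∈ Finset.range n, θ r
            ≤ ∑ r ∈ Finset.range n, (I (r + 1) - I r) :=
              Finset.sum_le_sum fun r hr =>
                (hθ r (lt_of_lt_of_le (Finset.mem_range.mp hr) hnlt.le)).2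
          _ = I n - I 0 := Finset.sum_range_sub (fun r => I r) n
      obtain ⟨ht0, ht1⟩ := hθ n hnlt
      have hx : I 0 + ∑ r ∈ Finset.range n, θ r ∈ Set.Icc (I 0) (I Nn) := by
        constructor
        · linarith
        · have := hmono n Nn hnlt.le le_rfl
          linarith
      have hyt : I n + θ n ∈ Set.Icc (I 0) (I Nn) := by
        constructor
        · have := hmono 0 n (Nat.zero_le n) hnlt.le
          linarith
        · have := hmono (n + 1) Nn hk le_rfl
          linarith
      have hic := convex_incr hJ hx hyt (by linarith) ht0
      rw [Finset.sum_range_succ, Finset.sum_range_succ]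
      have harg : I 0 + (∑ r ∈ Finset.range n, θ r + θ n)
          = I 0 + ∑ r ∈ Finset.range n, θ r + θ n := by ring
      rw [harg]
      linarith
  exact key Nn le_rfl

private lemma piece_cost {Nn : ℕ} {I : ℕ → ℝ} {J : ℝ → ℝ} {h f g : ℕ → ℝ}
    (hpw : ∀ r, r < Nn → ∀ θ ∈ Set.Icc (I r) (I (r + 1)),
      J θ = h r / 2 * θ ^ 2 + f r * θ + g r)
    {r : ℕ} (hr : r < Nn) {t : ℝ} (h0 : 0 ≤ t) (h1 : t ≤ I (r + 1) - I r) :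
    h r / 2 * t ^ 2 + (h r * I r + f r) * t = J (I r + t) - J (I r) := by
  have e1 := hpw r hr (I r + t) ⟨by linarith, by linarith⟩
  have e2 := hpw r hr (I r) ⟨le_refl _, by linarith⟩
  rw [e1, e2]; ring

/-- The appendix reformulation: an optimizer of the transformed separable
quadratic program (45) yields, via `Θ_i* = I_{i,0} + Σ_r θ*_{i,r}` (46), an
optimizer of the coordination problem (11) with cost `Σ_i J̃_i(Θ_i)`.
(Pieces are 0-based: piece `r < N i` of `J̃_i` lives on `[I i r, I i (r+1)]`.) -/
theorem stmt_18 (M m : ℕ)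
    (N : Fin M → ℕ) (hN : ∀ i, 1 ≤ N i)
    (I : Fin M → ℕ → ℝ) (hI : ∀ i, ∀ r, r < N i → I i r < I i (r + 1))
    (Jt : Fin M → ℝ → ℝ)
    (hJtconv : ∀ i, ConvexOn ℝ (Set.Icc (I i 0) (I i (N i))) (Jt i))
    (h f g : Fin M → ℕ → ℝ)
    (hpw : ∀ i, ∀ r, r < N i → ∀ θ ∈ Set.Icc (I i r) (I i (r + 1)),
      Jt i θ = h i r / 2 * θ ^ 2 + f i r * θ + g i r)
    (hnondeg : ∀ i, ∀ r, r + 1 < N i →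
      0 < h i r ∨ (f i r, g i r) ≠ (f i (r + 1), g i (r + 1)))
    (a : Fin M → Fin m → ℝ) (b : Fin m → ℝ)
    (θstar : Fin M → ℕ → ℝ)
    (hfeas : (∀ i, ∀ r, r < N i →
        0 ≤ θstar i r ∧ θstar i r ≤ I i (r + 1) - I i r) ∧
      ∀ j, ∑ i, a i j * (I i 0 + ∑ r ∈ Finset.range (N i), θstar i r) = b j)
    (hopt : ∀ θ : Fin M → ℕ → ℝ,
      ((∀ i, ∀ r, r < N i → 0 ≤ θ i r ∧ θ i r ≤ I i (r + 1) - I i r) ∧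
        ∀ j, ∑ i, a i j * (I i 0 + ∑ r ∈ Finset.range (N i), θ i r) = b j) →
      ∑ i, ∑ r ∈ Finset.range (N i),
          (h i r / 2 * θstar i r ^ 2 + (h i r * I i r + f i r) * θstar i r) ≤
        ∑ i, ∑ r ∈ Finset.range (N i),
          (h i r / 2 * θ i r ^ 2 + (h i r * I i r + f i r) * θ i r)) :
    (∀ i, I i 0 ≤ I i 0 + ∑ r ∈ Finset.range (N i), θstar i r ∧
        I i 0 + ∑ r ∈ Finset.range (N i), θstar i r ≤ I i (N i)) ∧
    (∀ j, ∑ i, a i j * (I i 0 + ∑ r ∈ Finset.range (N i), θstar i r) = b j) ∧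
    ∀ Θ : Fin M → ℝ,
      (∀ i, I i 0 ≤ Θ i ∧ Θ i ≤ I i (N i)) →
      (∀ j, ∑ i, a i j * Θ i = b j) →
      ∑ i, Jt i (I i 0 + ∑ r ∈ Finset.range (N i), θstar i r) ≤ ∑ i, Jt i (Θ i) := by
  obtain ⟨hbox, hlin⟩ := hfeas
  have hS0 : ∀ i, 0 ≤ ∑ r ∈ Finset.range (N i), θstar i r := fun i =>
    Finset.sum_nonneg fun r hr => (hbox i r (Finset.mem_range.mp hr)).1
  have hSN : ∀ i, ∑ r ∈ Finset.range (N i), θstar i r ≤ I i (N i) - I i 0 := by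
    intro i
    calc ∑ r ∈ Finset.range (N i), θstar i r
        ≤ ∑ r ∈ Finset.range (N i), (I i (r + 1) - I i r) :=
          Finset.sum_le_sum fun r hr => (hbox i r (Finset.mem_range.mp hr)).2
      _ = I i (N i) - I i 0 := Finset.sum_range_sub (fun r => I i r) (N i)
  refine ⟨fun i => ⟨by linarith [hS0 i], by linarith [hSN i]⟩, hlin, ?_⟩
  intro Θ hΘbox hΘlin
  set gθ : Fin M → ℕ → ℝ :=
    fun i r => min (Θ i) (I i (r + 1)) - min (Θ i) (I i r) with hgθ
  have hgb : ∀ i, ∀ r, r < N i → 0 ≤ gθ i r ∧ gθ i r ≤ I i (r + 1) - I i r := by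
    intro i r hr
    have h1 : I i r ≤ I i (r + 1) := (hI i r hr).le
    constructor
    · simp only [hgθ, sub_nonneg]
      exact min_le_min le_rfl h1
    · simp only [hgθ]
      rcases le_total (Θ i) (I i r) with hc | hc
      · rw [min_eq_left hc, min_eq_left (hc.trans h1)]
        linarith
      · rw [min_eq_right hc]
        linarith [min_le_right (Θ i) (I i (r + 1))]
  have hgsum : ∀ i, ∑ r ∈ Finset.range (N i), gθ i r = Θ i - I i 0 := by
    intro i
    have h0 : min (Θ i) (I i 0) = I i 0 := min_eq_right (hΘbox i).1
    have hN' : min (Θ i) (I i (N i)) = Θ i := min_eq_left (hΘbox i).2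
    have hts := Finset.sum_range_sub (fun r => min (Θ i) (I i r)) (N i)
    simp only [hgθ]
    rw [hts, h0, hN']
  have hgfeas : (∀ i, ∀ r, r < N i → 0 ≤ gθ i r ∧ gθ i r ≤ I i (r + 1) - I i r) ∧
      ∀ j, ∑ i, a i j * (I i 0 + ∑ r ∈ Finset.range (N i), gθ i r) = b j := by
    refine ⟨hgb, fun j => ?_⟩
    have e : ∀ i, I i 0 + ∑ r ∈ Finset.range (N i), gθ i r = Θ i := by
      intro i
      rw [hgsum i]; ring
    simp only [e]
    exact hΘlin j
  have hgcost : ∀ i, ∑ r ∈ Finset.range (N i),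
      (h i r / 2 * gθ i r ^ 2 + (h i r * I i r + f i r) * gθ i r)
      = Jt i (Θ i) - Jt i (I i 0) := by
    intro i
    have step : ∀ r ∈ Finset.range (N i),
        h i r / 2 * gθ i r ^ 2 + (h i r * I i r + f i r) * gθ i r
        = Jt i (min (Θ i) (I i (r + 1))) - Jt i (min (Θ i) (I i r)) := by
      intro r hr'
      have hr := Finset.mem_range.mp hr'
      obtain ⟨hb0, hb1⟩ := hgb i r hr
      rw [piece_cost (hpw i) hr hb0 hb1]
      rcases le_total (Θ i) (I i r) with hc | hc
      · have e1 : min (Θ i) (I i r) = Θ i := min_eq_left hc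
        have e2 : min (Θ i) (I i (r + 1)) = Θ i := min_eq_left (hc.trans (hI i r hr).le)
        have e3 : gθ i r = 0 := by simp only [hgθ]; rw [e1, e2]; ring
        rw [e3, e1, e2, add_zero]
        ring
      · have e1 : min (Θ i) (I i r) = I i r := min_eq_right hc
        have e2 : I i r + gθ i r = min (Θ i) (I i (r + 1)) := by
          simp only [hgθ]; rw [e1]; ring
        rw [e2, e1]
    rw [Finset.sum_congr rfl step,
      Finset.sum_range_sub (fun r => Jt i (min (Θ i) (I i r)))]
    rw [min_eq_left (hΘbox i).2, min_eq_right (hΘbox i).1]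
  have hscost : ∀ i,
      Jt i (I i 0 + ∑ r ∈ Finset.range (N i), θstar i r) - Jt i (I i 0)
      ≤ ∑ r ∈ Finset.range (N i),
          (h i r / 2 * θstar i r ^ 2 + (h i r * I i r + f i r) * θstar i r) := by
    intro i
    have e : ∀ r ∈ Finset.range (N i),
        h i r / 2 * θstar i r ^ 2 + (h i r * I i r + f i r) * θstar i r
        = Jt i (I i r + θstar i r) - Jt i (I i r) := by
      intro r hr'
      have hr := Finset.mem_range.mp hr'
      exact piece_cost (hpw i) hr (hbox i r hr).1 (hbox i r hr).2
    rw [Finset.sum_congr rfl e]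
    exact sum_incr_ge (hI i) (hJtconv i) (fun r hr => hbox i r hr)
  have hopt' := hopt gθ hgfeas
  have lhs_ge :
      ∑ i, (Jt i (I i 0 + ∑ r ∈ Finset.range (N i), θstar i r) - Jt i (I i 0))
      ≤ ∑ i, ∑ r ∈ Finset.range (N i),
          (h i r / 2 * θstar i r ^ 2 + (h i r * I i r + f i r) * θstar i r) :=
    Finset.sum_le_sum fun i _ => hscost i
  have rhs_eq : ∑ i, ∑ r ∈ Finset.range (N i),
      (h i r / 2 * gθ i r ^ 2 + (h i r * I i r + f i r) * gθ i r)
      = ∑ i, (Jt i (Θ i) - Jt i (I i 0)) :=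
    Finset.sum_congr rfl fun i _ => hgcost i
  have hfin := lhs_ge.trans (hopt'.trans_eq rhs_eq)
  simp only [Finset.sum_sub_distrib] at hfin
  linarith
end
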